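/- For all integers k ≥ 3, ℓ ≥ 1 with k ≤ ℓ + 3 and every integer s ≥ 1, setting n = k(s+1) + ℓ, one has |E₁(n,k,s)| ≥ |E₀(n,k,s)|; equivalently, (ℓ+2)·C(ks+k−3, k−2) ≥ C(ks+k−2, k−1) − C(ks−1, k−1) + ℓ + 1. -/

import Mathlib

/-- The `(x,y)`-shift of a single edge `A` with respect to the family `F`. -/
def shiftEdge (x y : ℕ) (F : Finset (Finset ℕ)) (A : Finset ℕ) : Finset ℕ :=
  if y ∈ A ∧ x ∉ A ∧ insert x (A.erase y) ∉ F then insert x (A.erase y) else A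

/-- The `(x,y)`-shift of a family `F`. -/
def shiftFam (x y : ℕ) (F : Finset (Finset ℕ)) : Finset (Finset ℕ) :=
  F.image (shiftEdge x y F)

/-- The matching number: the largest size of a pairwise-disjoint subfamily. -/
noncomputable def matchingNumber (F : Finset (Finset ℕ)) : ℕ :=
  sSup {m | ∃ M ⊆ F, M.card = m ∧ (M : Set (Finset ℕ)).PairwiseDisjoint id}

/-- `F` is non-trivial on `[n]`: no vertex of `[n] = {1,…,n}` is isolated. -/
def NonTrivial (n : ℕ) (F : Finset (Finset ℕ)) : Prop :=
  ∀ v ∈ Finset.Icc 1 n, ∃ A ∈ F, v ∈ A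

/-- `F` is shifted on `Y`: all `(x,y)`-shifts with `x < y` in `Y` fix `F`. -/
def ShiftedOn (Y : Finset ℕ) (F : Finset (Finset ℕ)) : Prop :=
  ∀ x ∈ Y, ∀ y ∈ Y, x < y → shiftFam x y F = F

/-- The clique number of the `k`-graph `F` on `[n]`. -/
noncomputable def cliqueNum (n k : ℕ) (F : Finset (Finset ℕ)) : ℕ :=
  sSup {m | ∃ U ⊆ Finset.Icc 1 n, U.card = m ∧ Finset.powersetCard k U ⊆ F}

/-- The vertex-cover number of the `k`-graph `F` on `[n]`. -/
noncomputable def coverNum (n : ℕ) (F : Finset (Finset ℕ)) : ℕ :=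
  sInf {t | ∃ T ⊆ Finset.Icc 1 n, T.card = t ∧ ∀ A ∈ F, (A ∩ T).Nonempty}

/-- The link `N_F(x)`. -/
def nbr (F : Finset (Finset ℕ)) (x : ℕ) : Finset (Finset ℕ) :=
  (F.filter fun A => x ∈ A).image fun A => A.erase x

/-- The link `N_F(x,y)`. -/
def nbr2 (F : Finset (Finset ℕ)) (x y : ℕ) : Finset (Finset ℕ) :=
  (F.filter fun A => x ∈ A ∧ y ∈ A).image fun A => (A.erase x).erase y

/-- The link `N_F(x, ȳ)`. -/
def nbrBar (F : Finset (Finset ℕ)) (x y : ℕ) : Finset (Finset ℕ) :=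
  (F.filter fun A => x ∈ A ∧ y ∉ A).image fun A => A.erase x

/-- The extremal family `E₀(n,k,s)`. -/
def E0 (n k s : ℕ) : Finset (Finset ℕ) :=
  Finset.powersetCard k (Finset.Icc 1 (k * s + k - 2)) ∪
  ((Finset.powersetCard k (Finset.Icc 1 n)).filter
    (fun A => A \ Finset.Icc 1 (k * s + k - 2) = {k * s + k - 1} ∧
      (A ∩ Finset.Icc 1 (k - 1)).Nonempty)) ∪
  ((Finset.Icc (k * s + k) n).image (fun x => insert x (Finset.Icc 1 (k - 1))))

open Classical in
/-- The extremal family `E₁(n,k,s)`. -/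
noncomputable def E1 (n k s : ℕ) : Finset (Finset ℕ) :=
  Finset.powersetCard k (Finset.Icc 1 (k * s + k - 2)) ∪
  ((Finset.powersetCard k (Finset.Icc 1 n)).filter
    (fun A => 1 ∈ A ∧ ∃ x ∈ Finset.Icc (k * s + k - 1) n,
      A \ Finset.Icc 1 (k * s + k - 2) = {x}))

/-- `F` is `s`-saturated on `[n]`. -/
def Saturated (n k s : ℕ) (F : Finset (Finset ℕ)) : Prop :=
  matchingNumber F ≤ s ∧
  ∀ G ∈ Finset.powersetCard k (Finset.Icc 1 n), G ∉ F →
    matchingNumber (insert G F) = s + 1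


open Finset

lemma key_ineq (c a l : ℕ) (hc : 1 ≤ c) (hca : c < a) (hcl : c ≤ l + 1) :
    Nat.choose (a+c) (c+1) + l + 1 ≤ (l+2) * Nat.choose (a+c-1) c + Nat.choose (a-1) (c+1) := by
  have hsplit : Icc c (a+c-1) = Icc c (a-2) ∪ Icc (a-1) (a+c-1) := by
    ext i; simp only [mem_union, mem_Icc]; omega
  have hdisj : Disjoint (Icc c (a-2)) (Icc (a-1) (a+c-1)) := by
    rw [disjoint_left]; intro i hi hi'; simp only [mem_Icc] at hi hi'; omega
  have hA : (a+c).choose (c+1) = ∑ i ∈ Icc c (a+c-1), i.choose c := by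
    rw [Nat.sum_Icc_choose]; congr 1; omega
  have hB : (a-1).choose (c+1) = ∑ i ∈ Icc c (a-2), i.choose c := by
    rw [Nat.sum_Icc_choose]; congr 1; omega
  have h1 : Nat.choose (a+c) (c+1)
      = Nat.choose (a-1) (c+1) + ∑ i ∈ Icc (a-1) (a+c-1), i.choose c := by
    rw [hA, hB, hsplit, sum_union hdisj]
  have hsplit2 : Icc (a-1) (a+c-1) = insert (a+c-1) (Icc (a-1) (a+c-2)) := by
    ext i; simp only [mem_insert, mem_Icc]; omega
  have h2 : ∑ i ∈ Icc (a-1) (a+c-2), i.choose c ≤ c * Nat.choose (a+c-2) c := by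
    calc ∑ i ∈ Icc (a-1) (a+c-2), i.choose c
        ≤ (Icc (a-1) (a+c-2)).card * Nat.choose (a+c-2) c := by
          apply Finset.sum_le_card_nsmul
          intro i hi; simp only [mem_Icc] at hi
          exact Nat.choose_le_choose c hi.2
      _ = c * Nat.choose (a+c-2) c := by rw [Nat.card_Icc]; congr 1; omega
  have h3 : ∑ i ∈ Icc (a-1) (a+c-1), i.choose c
      ≤ Nat.choose (a+c-1) c + c * Nat.choose (a+c-2) c := by
    rw [hsplit2, sum_insert (by simp only [mem_Icc]; omega)]
    exact Nat.add_le_add_left h2 _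
  have hpascal : Nat.choose (a+c-1) c = Nat.choose (a+c-2) (c-1) + Nat.choose (a+c-2) c := by
    have h : a+c-1 = (a+c-2)+1 := by omega
    have hc' : c = (c-1)+1 := by omega
    rw [h, hc', Nat.choose_succ_succ]; simp [Nat.succ_eq_add_one]
  have hpos : 1 ≤ Nat.choose (a+c-2) (c-1) := Nat.choose_pos (by omega)
  nlinarith [h1, h3, hpascal, hpos, Nat.choose_le_choose c (show a+c-2 ≤ a+c-1 by omega), hcl]


/-- for `k ≤ ℓ + 3`, `|E₁| ≥ |E₀|`. -/
theorem stmt11 (k l : ℕ) (hk : 3 ≤ k) (hl : 1 ≤ l) (hkl : k ≤ l + 3)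
    (s : ℕ) (hs : 1 ≤ s) :
    (E0 (k * (s + 1) + l) k s).card ≤ (E1 (k * (s + 1) + l) k s).card ∧
    (Nat.choose (k * s + k - 2) (k - 1) : ℤ) - Nat.choose (k * s - 1) (k - 1) + l + 1 ≤
      ((l : ℤ) + 2) * Nat.choose (k * s + k - 3) (k - 2) := by
  classical
  obtain ⟨a, ha⟩ : ∃ a, k * s = a := ⟨_, rfl⟩
  have hka : k ≤ a := by
    have h := Nat.mul_le_mul_left k hs
    rw [mul_one, ha] at h; exact h
  have hring : k * (s + 1) + l = a + k + l := by rw [← ha]; ring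
  -- the key numeric inequality
  have hkey := key_ineq (k-2) a l (by omega) (by omega) (by omega)
  rw [show a+(k-2)-1 = a+k-3 by omega, show (k-2)+1 = k-1 by omega,
    show a+(k-2) = a+k-2 by omega] at hkey
  constructor
  · -- cardinality comparison
    set P : Finset (Finset ℕ) := Finset.powersetCard k (Finset.Icc 1 (a + k - 2)) with hPdef
    set Q : Finset (Finset ℕ) := (Finset.powersetCard k (Finset.Icc 1 (a+k+l))).filter
      (fun A => A \ Finset.Icc 1 (a + k - 2) = {a + k - 1} ∧
        (A ∩ Finset.Icc 1 (k - 1)).Nonempty) with hQdef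
    set R : Finset (Finset ℕ) := (Finset.Icc (a + k) (a+k+l)).image
      (fun x => insert x (Finset.Icc 1 (k - 1))) with hRdef
    set B : Finset (Finset ℕ) := (Finset.powersetCard k (Finset.Icc 1 (a+k+l))).filter
      (fun A => 1 ∈ A ∧ ∃ x ∈ Finset.Icc (a + k - 1) (a+k+l),
        A \ Finset.Icc 1 (a + k - 2) = {x}) with hBdef
    have hsub0 : E0 (k * (s + 1) + l) k s ⊆ P ∪ Q ∪ R := by
      intro A hA
      simp only [E0, hring, ha, mem_union, mem_filter, mem_image, mem_powersetCard] at hA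
      simp only [hPdef, hQdef, hRdef, mem_union, mem_filter, mem_image, mem_powersetCard]
      exact hA
    have hsub1 : P ∪ B ⊆ E1 (k * (s + 1) + l) k s := by
      intro A hA
      simp only [hPdef, hBdef, mem_union, mem_filter, mem_powersetCard] at hA
      simp only [E1, hring, ha, mem_union, mem_filter, mem_powersetCard]
      exact hA
    have h0 : (E0 (k * (s + 1) + l) k s).card ≤ P.card + Q.card + R.card :=
      calc (E0 (k * (s + 1) + l) k s).card ≤ (P ∪ Q ∪ R).card := card_le_card hsub0
        _ ≤ (P ∪ Q).card + R.card := card_union_le _ _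
        _ ≤ P.card + Q.card + R.card := Nat.add_le_add_right (card_union_le _ _) _
    have hPcard : P.card = (a+k-2).choose k := by
      rw [hPdef, card_powersetCard, Nat.card_Icc, show a+k-2+1-1 = a+k-2 by omega]
    have hRcard : R.card ≤ l + 1 := by
      rw [hRdef]
      refine le_trans card_image_le ?_
      rw [Nat.card_Icc]; omega
    -- the family S bounding Q
    set S : Finset (Finset ℕ) := (Finset.powersetCard (k-1) (Finset.Icc 1 (a+k-2))).filter
      (fun B' => (B' ∩ Finset.Icc 1 (k - 1)).Nonempty) with hSdef
    have hfilt : (Finset.powersetCard (k-1) (Finset.Icc 1 (a+k-2))).filter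
        (fun B' => ¬ (B' ∩ Finset.Icc 1 (k - 1)).Nonempty)
        = Finset.powersetCard (k-1) (Finset.Icc k (a+k-2)) := by
      ext B'
      simp only [mem_filter, mem_powersetCard, not_nonempty_iff_eq_empty,
        eq_empty_iff_forall_notMem, mem_inter, mem_Icc, not_and]
      constructor
      · rintro ⟨⟨hsub, hc⟩, hemp⟩
        refine ⟨fun y hy => ?_, hc⟩
        have h1 := mem_Icc.mp (hsub hy)
        have h2 := hemp y hy
        rw [mem_Icc]
        omega
      · rintro ⟨hsub, hc⟩
        have h1 : ∀ y ∈ B', k ≤ y ∧ y ≤ a+k-2 := fun y hy => mem_Icc.mp (hsub hy)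
        refine ⟨⟨fun y hy => ?_, hc⟩, fun y hy => ?_⟩
        · have := h1 y hy; rw [mem_Icc]; omega
        · have := h1 y hy; omega
    have hScard : S.card + (a-1).choose (k-1) = (a+k-2).choose (k-1) := by
      have h := card_filter_add_card_filter_not
        (s := Finset.powersetCard (k-1) (Finset.Icc 1 (a+k-2)))
        (p := fun B' => (B' ∩ Finset.Icc 1 (k - 1)).Nonempty)
      rw [hfilt, card_powersetCard, card_powersetCard, Nat.card_Icc, Nat.card_Icc,
        show a+k-2+1-k = a-1 by omega, show a+k-2+1-1 = a+k-2 by omega] at h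
      rw [hSdef]
      exact h
    have hQS : Q.card ≤ S.card := by
      apply Finset.card_le_card_of_injOn (fun A => A.erase (a+k-1))
      · intro A hA
        simp only [mem_coe, hQdef] at hA
        rw [mem_filter, mem_powersetCard] at hA
        obtain ⟨⟨hsubA, hcardA⟩, hsd, hne⟩ := hA
        have hx : a+k-1 ∈ A := by
          have h : a+k-1 ∈ A \ Finset.Icc 1 (a+k-2) := by
            rw [hsd]; exact mem_singleton_self _
          exact (mem_sdiff.mp h).1
        dsimp only
        rw [hSdef, mem_coe, mem_filter, mem_powersetCard]
        refine ⟨⟨?_, ?_⟩, ?_⟩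
        · intro y hy
          rw [mem_erase] at hy
          by_contra hyn
          have h : y ∈ A \ Finset.Icc 1 (a+k-2) := mem_sdiff.mpr ⟨hy.2, hyn⟩
          rw [hsd, mem_singleton] at h
          exact hy.1 h
        · rw [card_erase_of_mem hx, hcardA]
        · obtain ⟨w, hw⟩ := hne
          rw [mem_inter] at hw
          have hwne : w ≠ a+k-1 := by
            have := (mem_Icc.mp hw.2).2; omega
          exact ⟨w, mem_inter.mpr ⟨mem_erase.mpr ⟨hwne, hw.1⟩, hw.2⟩⟩
      · intro A1 h1 A2 h2 he
        simp only [mem_coe, hQdef, mem_filter] at h1 h2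
        have hx1 : a+k-1 ∈ A1 := by
          have h : a+k-1 ∈ A1 \ Finset.Icc 1 (a+k-2) := by
            rw [h1.2.1]; exact mem_singleton_self _
          exact (mem_sdiff.mp h).1
        have hx2 : a+k-1 ∈ A2 := by
          have h : a+k-1 ∈ A2 \ Finset.Icc 1 (a+k-2) := by
            rw [h2.2.1]; exact mem_singleton_self _
          exact (mem_sdiff.mp h).1
        have he' : A1.erase (a+k-1) = A2.erase (a+k-1) := he
        rw [← insert_erase hx1, he', insert_erase hx2]
    -- lower bound on B
    have hBcard : (l+2) * (a+k-3).choose (k-2) ≤ B.card := by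
      have hinj := Finset.card_le_card_of_injOn
        (s := (Finset.Icc (a+k-1) (a+k+l)) ×ˢ Finset.powersetCard (k-2) (Finset.Icc 2 (a+k-2)))
        (t := B) (fun p => insert p.1 (insert 1 p.2)) ?_ ?_
      · rw [card_product, card_powersetCard, Nat.card_Icc, Nat.card_Icc,
          show a+k+l+1-(a+k-1) = l+2 by omega, show a+k-2+1-2 = a+k-3 by omega] at hinj
        exact hinj
      · intro p hp
        rw [mem_coe, mem_product, mem_powersetCard, mem_Icc] at hp
        obtain ⟨⟨hx1, hx2⟩, hB1, hB2⟩ := hp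
        have hBub : ∀ y ∈ p.2, 2 ≤ y ∧ y ≤ a+k-2 := fun y hy => mem_Icc.mp (hB1 hy)
        have h1nB : (1:ℕ) ∉ p.2 := fun h => by have := hBub 1 h; omega
        have hxnB : p.1 ∉ insert 1 p.2 := by
          simp only [mem_insert]
          push_neg
          exact ⟨by omega, fun h => by have := hBub _ h; omega⟩
        dsimp only
        rw [hBdef, mem_coe, mem_filter, mem_powersetCard]
        refine ⟨⟨?_, ?_⟩, ?_, ⟨p.1, mem_Icc.mpr ⟨hx1, hx2⟩, ?_⟩⟩
        · intro y hy
          simp only [mem_insert] at hy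
          rw [mem_Icc]
          rcases hy with rfl | rfl | h
          · omega
          · omega
          · have := hBub y h; omega
        · rw [card_insert_of_notMem hxnB, card_insert_of_notMem h1nB, hB2]; omega
        · simp [mem_insert]
        · ext y
          simp only [mem_sdiff, mem_insert, mem_singleton, mem_Icc, not_and, not_le]
          constructor
          · rintro ⟨(rfl | rfl | h), hni⟩
            · rfl
            · exfalso; have := hni (by omega); omega
            · exfalso; have h2 := hBub y h; have := hni (by omega); omega
          · rintro rfl
            exact ⟨Or.inl rfl, fun h1 => by omega⟩
      · intro p hp q hq h
        simp only [mem_coe, mem_product, mem_powersetCard, mem_Icc] at hp hq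
        obtain ⟨⟨hpx1, hpx2⟩, hpB1, hpB2⟩ := hp
        obtain ⟨⟨hqx1, hqx2⟩, hqB1, hqB2⟩ := hq
        have hpBub : ∀ y ∈ p.2, 2 ≤ y ∧ y ≤ a+k-2 := fun y hy => mem_Icc.mp (hpB1 hy)
        have hqBub : ∀ y ∈ q.2, 2 ≤ y ∧ y ≤ a+k-2 := fun y hy => mem_Icc.mp (hqB1 hy)
        have hp1nB : (1:ℕ) ∉ p.2 := fun hh => by have := hpBub 1 hh; omega
        have hq1nB : (1:ℕ) ∉ q.2 := fun hh => by have := hqBub 1 hh; omega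
        have hpxn : p.1 ∉ insert 1 p.2 := by
          simp only [mem_insert]; push_neg
          exact ⟨by omega, fun hh => by have := hpBub _ hh; omega⟩
        have hqxn : q.1 ∉ insert 1 q.2 := by
          simp only [mem_insert]; push_neg
          exact ⟨by omega, fun hh => by have := hqBub _ hh; omega⟩
        have h' : insert p.1 (insert 1 p.2) = insert q.1 (insert 1 q.2) := h
        have hxq : p.1 = q.1 := by
          have h1 : p.1 ∈ insert q.1 (insert 1 q.2) := by
            rw [← h']; exact mem_insert_self _ _
          simp only [mem_insert] at h1
          rcases h1 with h1 | h1 | h1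
          · exact h1
          · omega
          · have := hqBub _ h1; omega
        have hi1 : insert 1 p.2 = insert 1 q.2 := by
          rw [← erase_insert hpxn, h', hxq, erase_insert hqxn]
        have hi2 : p.2 = q.2 := by
          rw [← erase_insert hp1nB, hi1, erase_insert hq1nB]
        exact Prod.ext hxq hi2
    have hdisjPB : Disjoint P B := by
      rw [disjoint_left]
      intro A hA hB
      rw [hPdef, mem_powersetCard] at hA
      rw [hBdef, mem_filter] at hB
      obtain ⟨-, -, x, hx, hsd⟩ := hB
      have h : x ∈ A \ Finset.Icc 1 (a+k-2) := by rw [hsd]; exact mem_singleton_self _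
      rw [mem_sdiff] at h
      exact h.2 (hA.1 h.1)
    have h1 : P.card + B.card ≤ (E1 (k * (s + 1) + l) k s).card := by
      rw [← card_union_of_disjoint hdisjPB]
      exact card_le_card hsub1
    have hmono : (a-1).choose (k-1) ≤ (a+k-2).choose (k-1) :=
      Nat.choose_le_choose _ (by omega)
    linarith [h0, h1, hPcard, hRcard, hQS, hScard, hBcard, hkey]
  · -- the numeric inequality
    rw [ha]
    have h : ((a+k-2).choose (k-1) : ℤ) + l + 1
        ≤ ((l:ℤ)+2) * ((a+k-3).choose (k-2)) + (a-1).choose (k-1) := by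
      exact_mod_cast hkey
    linarith
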